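/- Let q be an odd prime power, u, v ∈ F_q with u ≠ v, and let F = Σ_{i=0}^n F_i x^i be a monic irreducible polynomial of degree n ≥ 1 over F_q. Define the polynomial F^Q(x) := Σ_{i=0}^n F_i (x^2 − uv)^i (2x − (u+v))^{n−i} ∈ F_q[x]. Then F^Q is irreducible over F_q if and only if F(u)·F(v) is a non-square in F_q (equivalently, (F(u)F(v))^{(q−1)/2} = −1). -/

import Mathlib

open Polynomial

/-- The rational transform `f^Q = Σ_{i=0}^{deg f} f_i g^i h^{deg f - i}` of a monic
polynomial `f` with the rational function `Q = g/h`. -/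
noncomputable def ratTransform {F : Type*} [Field F] (g h f : F[X]) : F[X] :=
  ∑ i ∈ Finset.range (f.natDegree + 1), C (f.coeff i) * g ^ i * h ^ (f.natDegree - i)

open IntermediateField

lemma aeval_ratTransform {F A : Type*} [Field F] [CommRing A] [Algebra F A]
    (g h f : F[X]) (β γ : A) (hrel : aeval β g = γ * aeval β h) :
    aeval β (ratTransform g h f) = (aeval β h) ^ f.natDegree * aeval γ f := by
  rw [ratTransform, map_sum, Polynomial.aeval_eq_sum_range (p := f) γ, Finset.mul_sum]
  apply Finset.sum_congr rfl
  intro i hi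
  have hi' : i ≤ f.natDegree := Nat.lt_succ_iff.mp (Finset.mem_range.mp hi)
  have hp : (aeval β h) ^ i * (aeval β h) ^ (f.natDegree - i) = (aeval β h) ^ f.natDegree := by
    rw [← pow_add]; congr 1; omega
  rw [map_mul, map_mul, aeval_C, map_pow, map_pow, hrel, mul_pow, Algebra.smul_def]
  linear_combination (algebraMap F A (f.coeff i) * γ ^ i) * hp

lemma ratTransform_monic_natDegree {F : Type*} [Field F] (u v : F) (h2 : (2:F) ≠ 0)
    (f : F[X]) (hm : f.Monic) :
    (ratTransform (X ^ 2 - C (u * v)) (C 2 * X - C (u + v)) f).Monic ∧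
    (ratTransform (X ^ 2 - C (u * v)) (C 2 * X - C (u + v)) f).natDegree = 2 * f.natDegree := by
  set n := f.natDegree with hn
  set g : F[X] := X ^ 2 - C (u * v) with hg
  set h : F[X] := C 2 * X - C (u + v) with hh
  have hgm : g.Monic := monic_X_pow_sub_C _ (by norm_num)
  have hgd : g.natDegree = 2 := natDegree_X_pow_sub_C
  have hhd : h.natDegree = 1 := by
    rw [hh, sub_eq_add_neg, ← map_neg]; exact natDegree_linear h2
  have hterm : ∀ i ≤ n, (C (f.coeff i) * g ^ i * h ^ (n - i)).natDegree ≤ n + i := by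
    intro i hi
    refine natDegree_mul_le.trans ?_
    have h1 : (C (f.coeff i) * g ^ i).natDegree ≤ 2 * i :=
      natDegree_mul_le.trans (by simp [natDegree_pow, hgd]; omega)
    have h2' : (h ^ (n - i)).natDegree ≤ n - i := by simp [natDegree_pow, hhd]
    omega
  have hcoeff : (ratTransform g h f).coeff (2 * n) = 1 := by
    rw [ratTransform, ← hn, finset_sum_coeff, Finset.sum_range_succ]
    have hz : ∀ i ∈ Finset.range n, (C (f.coeff i) * g ^ i * h ^ (n - i)).coeff (2 * n) = 0 := by
      intro i hi
      have hi' := Finset.mem_range.mp hi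
      exact coeff_eq_zero_of_natDegree_lt (lt_of_le_of_lt (hterm i hi'.le) (by omega))
    rw [Finset.sum_congr rfl hz, Finset.sum_const, smul_zero, zero_add]
    have : C (f.coeff n) * g ^ n * h ^ (n - n) = g ^ n := by
      rw [hm.coeff_natDegree, Nat.sub_self, pow_zero, map_one, one_mul, mul_one]
    rw [this]
    have : (g ^ n).natDegree = 2 * n := by rw [natDegree_pow, hgd]; ring
    rw [← this]
    exact (hgm.pow n).coeff_natDegree
  have hle : (ratTransform g h f).natDegree ≤ 2 * n := by
    rw [ratTransform, ← hn]
    refine natDegree_sum_le_of_forall_le _ _ ?_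
    intro i hi
    have hi' : i ≤ n := Nat.lt_succ_iff.mp (Finset.mem_range.mp hi)
    exact (hterm i hi').trans (by omega)
  refine ⟨monic_of_natDegree_le_of_coeff_eq_one _ hle hcoeff, ?_⟩
  refine le_antisymm hle (le_natDegree_of_ne_zero ?_)
  rw [hcoeff]; exact one_ne_zero

lemma geom_nat (q : ℕ) (hq : 1 ≤ q) : ∀ n : ℕ, (q - 1) * ∑ i ∈ Finset.range n, q ^ i = q ^ n - 1 := by
  intro n
  induction n with
  | zero => simp
  | succ m ih =>
    rw [Finset.sum_range_succ, Nat.mul_add, ih, pow_succ, Nat.sub_mul]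
    have h2 : 1 ≤ q ^ m := Nat.one_le_pow _ _ (by omega)
    have h3 : q ^ m ≤ q * q ^ m := Nat.le_mul_of_pos_left _ (by omega)
    rw [mul_comm q (q ^ m)] at h3 ⊢
    omega

lemma key_square {F K : Type*} [Field F] [Fintype F] [Field K] [Fintype K] [Algebra F K]
    (hq : Odd (Fintype.card F)) (n : ℕ) (hn : 1 ≤ n)
    (hcard : Fintype.card K = Fintype.card F ^ n)
    (s : K) (c : F)
    (hnorm : s ^ (∑ i ∈ Finset.range n, Fintype.card F ^ i) = algebraMap F K c) :
    (IsSquare s ↔ IsSquare c) ∧ (s = 0 ↔ c = 0) := by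
  set q := Fintype.card F with hqdef
  set T := ∑ i ∈ Finset.range n, q ^ i with hT
  have hq1 : 1 < q := Fintype.one_lt_card
  have hT1 : 0 < T := by
    rw [hT]
    exact Finset.sum_pos (fun i _ => pow_pos (by omega) i) ⟨0, Finset.mem_range.mpr (by omega)⟩
  have hinj : Function.Injective (algebraMap F K) := (algebraMap F K).injective
  have hzero : s = 0 ↔ c = 0 := by
    constructor
    · intro h0
      apply hinj
      rw [← hnorm, h0, zero_pow (by omega), map_zero]
    · intro h0
      rw [h0, map_zero] at hnorm
      exact pow_eq_zero_iff (by omega) |>.mp hnorm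
  refine ⟨?_, hzero⟩
  have hcharF : ringChar F ≠ 2 := by
    intro h
    have := FiniteField.even_card_iff_char_two.mp h
    rw [Nat.odd_iff] at hq; omega
  have hoddK : Odd (Fintype.card K) := by rw [hcard]; exact hq.pow
  have hcharK : ringChar K ≠ 2 := by
    intro h
    have := FiniteField.even_card_iff_char_two.mp h
    rw [Nat.odd_iff] at hoddK; omega
  by_cases hs0 : s = 0
  · have hc0 : c = 0 := hzero.mp hs0
    rw [hs0, hc0]
    constructor <;> intro _ <;> exact ⟨0, by ring⟩
  have hc0 : c ≠ 0 := fun h => hs0 (hzero.mpr h)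
  obtain ⟨m, hm⟩ := hq
  have hgeom : (q - 1) * T = q ^ n - 1 := geom_nat q (by omega) n
  have hmF : q / 2 = m := by omega
  have hmK : Fintype.card K / 2 = m * T := by
    rw [hcard]
    have h1 : 1 ≤ q ^ n := Nat.one_le_pow _ _ (by omega)
    have h2 : (q - 1) * T = 2 * (m * T) := by rw [hm, Nat.add_sub_cancel]; ring
    omega
  rw [FiniteField.isSquare_iff hcharK hs0, FiniteField.isSquare_iff hcharF hc0, hmK, hmF]
  rw [mul_comm m T, pow_mul, hnorm, ← map_pow]
  constructor
  · intro h1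
    apply hinj
    rw [h1, map_one]
  · intro h1
    rw [h1, map_one]

lemma key_norm {F K : Type*} [Field F] [Fintype F] [Field K] [Fintype K] [Algebra F K]
    (f : F[X]) (hmonic : f.Monic) (hirr : Irreducible f) (n : ℕ) (hdeg : f.natDegree = n)
    (hn : 1 ≤ n) (α : K) (hα : aeval α f = 0)
    (hgen : ∀ x : K, ∃ p : F[X], aeval α p = x)
    (hcard : Fintype.card K = Fintype.card F ^ n) (u v : F) :
    ((α - algebraMap F K u) * (α - algebraMap F K v)) ^ (∑ i ∈ Finset.range n, Fintype.card F ^ i)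
      = algebraMap F K (f.eval u * f.eval v) := by
  classical
  set q := Fintype.card F with hq
  set φ := algebraMap F K with hφ
  have hq1 : 1 < q := Fintype.one_lt_card
  set p := ringChar F with hpdef
  haveI : CharP F p := ringChar.charP F
  obtain ⟨d, hp, hqd⟩ := FiniteField.card F p
  haveI : CharP K p := charP_of_injective_algebraMap (algebraMap F K).injective p
  haveI : Fact p.Prime := ⟨hp⟩
  haveI : ExpChar K p := ExpChar.prime hp
  have hpow : ∀ (i : ℕ) (x : K), iterateFrobenius K p (d * i) x = x ^ q ^ i := by
    intro i x
    rw [iterateFrobenius_def, hq, hqd, ← pow_mul]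
  have hfix : ∀ (i : ℕ) (c : F), φ c ^ q ^ i = φ c := by
    intro i c
    rw [← map_pow, FiniteField.pow_card_pow]
  let Ψ : ℕ → (K →ₐ[F] K) := fun i =>
    { toRingHom := iterateFrobenius K p (d * i),
      commutes' := fun c => by simpa [hpow i] using hfix i c }
  have hΨ : ∀ (i : ℕ) (x : K), Ψ i x = x ^ q ^ i := fun i x => hpow i x
  have hroot : ∀ i : ℕ, aeval (α ^ q ^ i) f = 0 := by
    intro i
    rw [← hΨ, Polynomial.aeval_algHom_apply, hα, map_zero]
  -- injectivity of i ↦ α ^ q ^ i on range n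
  have haux : ∀ i j : ℕ, i < j → j < n → α ^ q ^ i ≠ α ^ q ^ j := by
    intro i j hij hjn heq
    set e := i + (n - j) with he
    have he1 : 1 ≤ e := by omega
    have hen : e < n := by omega
    have hαe : α ^ q ^ e = α := by
      have h1 : (α ^ q ^ i) ^ q ^ (n - j) = (α ^ q ^ j) ^ q ^ (n - j) := by rw [heq]
      rw [← pow_mul, ← pow_mul, ← pow_add, ← pow_add] at h1
      have h2 : j + (n - j) = n := by omega
      rw [h2] at h1
      have h3 : α ^ q ^ n = α := by rw [← hcard]; exact FiniteField.pow_card α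
      rw [h3] at h1
      rw [he]; exact h1
    have hall : ∀ x : K, x ^ q ^ e = x := by
      intro x
      obtain ⟨px, rfl⟩ := hgen x
      calc (aeval α px) ^ q ^ e = Ψ e (aeval α px) := (hΨ e _).symm
        _ = aeval (Ψ e α) px := (Polynomial.aeval_algHom_apply _ _ _).symm
        _ = aeval α px := by rw [hΨ, hαe]
    -- counting contradiction
    have hqe1 : 1 < q ^ e := Nat.one_lt_pow (by omega) hq1
    set P : K[X] := X ^ (q ^ e) - X with hP
    have hPdeg : P.natDegree = q ^ e := FiniteField.X_pow_card_sub_X_natDegree_eq K hqe1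
    have hPne : P ≠ 0 := fun h0 => by
      rw [h0] at hPdeg; simp at hPdeg; omega
    have hmem : ∀ x : K, x ∈ P.roots := by
      intro x
      rw [mem_roots hPne]
      simp [hP, IsRoot, hall x]
    have hcardle : Fintype.card K ≤ q ^ e := by
      have h1 : Finset.univ ⊆ P.roots.toFinset := fun x _ => Multiset.mem_toFinset.mpr (hmem x)
      calc Fintype.card K = Finset.univ.card := rfl
        _ ≤ P.roots.toFinset.card := Finset.card_le_card h1
        _ ≤ Multiset.card P.roots := P.roots.toFinset_card_le
        _ ≤ P.natDegree := P.card_roots'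
        _ = q ^ e := hPdeg
    rw [hcard] at hcardle
    exact absurd hcardle (not_le.mpr (Nat.pow_lt_pow_right hq1 hen))
  have hinj : Set.InjOn (fun i => α ^ q ^ i) (Finset.range n : Finset ℕ) := by
    intro i hi j hj hij
    simp only [Finset.coe_range, Set.mem_Iio] at hi hj
    by_contra hne
    rcases lt_or_gt_of_ne hne with h | h
    · exact haux i j h hj hij
    · exact haux j i h hi hij.symm
  -- splitting
  have hminp : minpoly F α = f := (minpoly.eq_of_irreducible_of_monic hirr hα hmonic).symm
  have hdvd : f ∣ (X : F[X]) ^ q ^ n - X := by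
    rw [← hminp]
    apply minpoly.dvd
    rw [map_sub, map_pow, aeval_X, ← hcard, FiniteField.pow_card, sub_self]
  have hK1 : 1 < Fintype.card K := Fintype.one_lt_card
  have hXne : ((X : F[X]) ^ q ^ n - X) ≠ 0 := by
    intro h0
    have h1 : ((X : F[X]) ^ q ^ n - X).natDegree = q ^ n :=
      FiniteField.X_pow_card_sub_X_natDegree_eq F (Nat.one_lt_pow (by omega) hq1)
    rw [h0, natDegree_zero] at h1
    have : 1 < q ^ n := Nat.one_lt_pow (by omega) hq1
    omega
  have hXsplits : Splits (((X : F[X]) ^ q ^ n - X).map φ) := by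
    rw [Polynomial.map_sub, Polynomial.map_pow, map_X,
      splits_iff_card_roots, ← hcard, FiniteField.roots_X_pow_card_sub_X,
      FiniteField.X_pow_card_sub_X_natDegree_eq K hK1]
    exact Finset.card_univ
  have hsplits : Splits (f.map φ) := hXsplits.of_dvd (Polynomial.map_ne_zero hXne) (Polynomial.map_dvd φ hdvd)
  -- roots description
  have hf0 : f ≠ 0 := hmonic.ne_zero
  have hsep : f.Separable := PerfectField.separable_of_irreducible hirr
  have hnodup : (f.map φ).roots.Nodup := nodup_roots (hsep.map)
  have hcardroots : Multiset.card (f.map φ).roots = n := by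
    rw [splits_iff_card_roots.mp hsplits, natDegree_map, hdeg]
  set T : Finset K := (Finset.range n).image (fun i => α ^ q ^ i) with hT
  have hTcard : T.card = n := by
    rw [hT, Finset.card_image_of_injOn hinj, Finset.card_range]
  have hTsub : T ⊆ (f.map φ).roots.toFinset := by
    intro x hx
    rw [hT, Finset.mem_image] at hx
    obtain ⟨i, _, rfl⟩ := hx
    rw [Multiset.mem_toFinset, mem_roots_map hf0]
    exact hroot i
  have hTeq : (f.map φ).roots.toFinset = T := by
    refine (Finset.eq_of_subset_of_card_le hTsub ?_).symm
    rw [Multiset.toFinset_card_of_nodup hnodup, hcardroots, hTcard]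
  have hroots : (f.map φ).roots = T.val := by
    have h1 : (f.map φ).roots.toFinset.val = (f.map φ).roots :=
      Multiset.dedup_eq_self.mpr hnodup
    rw [← h1, hTeq]
  -- evaluation as product over conjugates
  have hevalw : ∀ w : F, φ (f.eval w) = ∏ i ∈ Finset.range n, (φ w - α ^ q ^ i) := by
    intro w
    have hprod : f.map φ = (Multiset.map (fun a => X - C a) (f.map φ).roots).prod :=
      hsplits.eq_prod_roots_of_monic (hmonic.map φ)
    calc φ (f.eval w) = eval₂ φ (φ w) f := (eval₂_hom φ w).symm
      _ = (f.map φ).eval (φ w) := (eval_map φ (φ w)).symm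
      _ = ∏ i ∈ Finset.range n, (φ w - α ^ q ^ i) := by
          have hnod2 : (Multiset.map (fun i => α ^ q ^ i) (Finset.range n).val).Nodup :=
            (Finset.range n).nodup.map_on (by
              intro i hi j hj hij
              exact hinj (by simpa using hi) (by simpa using hj) hij)
          rw [hprod, eval_multiset_prod, Multiset.map_map, hroots, hT, Finset.image_val,
            Multiset.dedup_eq_self.mpr hnod2, Multiset.map_map]
          simp only [Finset.prod]
          apply congrArg
          apply Multiset.map_congr rfl
          intro i _
          simp
  -- Frobenius on s
  have hsi : ∀ i : ℕ, ((α - φ u) * (α - φ v)) ^ q ^ i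
      = (α ^ q ^ i - φ u) * (α ^ q ^ i - φ v) := by
    intro i
    have h1 : ∀ c : F, (α - φ c) ^ q ^ i = α ^ q ^ i - φ c := by
      intro c
      calc (α - φ c) ^ q ^ i = Ψ i (α - φ c) := (hΨ i _).symm
        _ = Ψ i α - Ψ i (φ c) := map_sub _ _ _
        _ = α ^ q ^ i - φ c := by rw [hΨ, (Ψ i).commutes]
    rw [mul_pow, h1 u, h1 v]
  calc ((α - φ u) * (α - φ v)) ^ (∑ i ∈ Finset.range n, q ^ i)
      = ∏ i ∈ Finset.range n, ((α - φ u) * (α - φ v)) ^ q ^ i :=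
        (Finset.prod_pow_eq_pow_sum _ _ _).symm
    _ = ∏ i ∈ Finset.range n, ((α ^ q ^ i - φ u) * (α ^ q ^ i - φ v)) := by
        exact Finset.prod_congr rfl fun i _ => hsi i
    _ = (∏ i ∈ Finset.range n, (α ^ q ^ i - φ u)) * ∏ i ∈ Finset.range n, (α ^ q ^ i - φ v) :=
        Finset.prod_mul_distrib
    _ = ((-1) ^ n * φ (f.eval u)) * ((-1) ^ n * φ (f.eval v)) := by
        have hneg : ∀ b : K, ∏ i ∈ Finset.range n, (α ^ q ^ i - b)
            = (-1) ^ n * ∏ i ∈ Finset.range n, (b - α ^ q ^ i) := by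
          intro b
          calc ∏ i ∈ Finset.range n, (α ^ q ^ i - b)
              = ∏ i ∈ Finset.range n, (-1 : K) * (b - α ^ q ^ i) :=
                Finset.prod_congr rfl fun i _ => by ring
            _ = (∏ _i ∈ Finset.range n, (-1 : K)) * ∏ i ∈ Finset.range n, (b - α ^ q ^ i) :=
                Finset.prod_mul_distrib
            _ = (-1) ^ n * ∏ i ∈ Finset.range n, (b - α ^ q ^ i) := by
                rw [Finset.prod_const, Finset.card_range]
        congr 1
        · rw [hevalw u]; exact hneg (φ u)
        · rw [hevalw v]; exact hneg (φ v)
    _ = φ (f.eval u * f.eval v) := by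
        rw [map_mul]
        ring_nf
        rw [Even.neg_one_pow ⟨n, by ring⟩, mul_one]

lemma aeval_mem_intermediateField {F L : Type*} [Field F] [Field L] [Algebra F L]
    (E : IntermediateField F L) {x : L} (hx : x ∈ E) (p : F[X]) :
    aeval x p ∈ E := by
  rw [Polynomial.aeval_eq_sum_range]
  refine sum_mem fun i _ => ?_
  rw [Algebra.smul_def]
  exact mul_mem (E.algebraMap_mem _) (pow_mem hx i)

theorem transform_irreducible_iff_nonsquare (F : Type*) [Field F] [Fintype F]
    (hq : Odd (Fintype.card F)) (u v : F) (huv : u ≠ v)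
    (f : F[X]) (hmonic : f.Monic) (hirr : Irreducible f)
    (n : ℕ) (hdeg : f.natDegree = n) (hn : 1 ≤ n) :
    Irreducible (ratTransform (X ^ 2 - C (u * v)) (C 2 * X - C (u + v)) f)
      ↔ ¬ IsSquare (f.eval u * f.eval v) := by
  classical
  have hcharF : ringChar F ≠ 2 := by
    intro h
    have := FiniteField.even_card_iff_char_two.mp h
    rw [Nat.odd_iff] at hq; omega
  have h2 : (2 : F) ≠ 0 := Ring.two_ne_zero hcharF
  obtain ⟨hQmonic, hQdeg⟩ := ratTransform_monic_natDegree u v h2 f hmonic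
  rw [hdeg] at hQdeg
  set g : F[X] := X ^ 2 - C (u * v) with hg
  set h : F[X] := C 2 * X - C (u + v) with hh
  set fQ : F[X] := ratTransform g h f with hfQ
  haveI : Fact (Irreducible f) := ⟨hirr⟩
  set K := AdjoinRoot f with hK
  haveI : FiniteDimensional F K := PowerBasis.finite (AdjoinRoot.powerBasis hmonic.ne_zero)
  haveI : Finite K := Module.finite_of_finite F
  letI : Fintype K := Fintype.ofFinite K
  set α : K := AdjoinRoot.root f with hα
  have hαf : aeval α f = 0 := by rw [AdjoinRoot.aeval_eq]; exact AdjoinRoot.mk_self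
  have hgen : ∀ x : K, ∃ p : F[X], aeval α p = x := fun x => by
    obtain ⟨p, hp⟩ := AdjoinRoot.mk_surjective x
    exact ⟨p, by rw [AdjoinRoot.aeval_eq, hp]⟩
  have hfinrank : Module.finrank F K = n := by
    rw [PowerBasis.finrank (AdjoinRoot.powerBasis hmonic.ne_zero),
      AdjoinRoot.powerBasis_dim, hdeg]
  have hcard : Fintype.card K = Fintype.card F ^ n := by
    rw [Module.card_eq_pow_finrank (K := F) (V := K), hfinrank]
  set s : K := (α - algebraMap F K u) * (α - algebraMap F K v) with hs
  have hnorm := key_norm f hmonic hirr n hdeg hn α hαf hgen hcard u v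
  obtain ⟨hsqiff, hziff⟩ := key_square hq n hn hcard s (f.eval u * f.eval v) hnorm
  constructor
  · -- Irreducible → nonsquare
    intro hI hsq
    obtain ⟨τ, hτ⟩ := hsqiff.mpr hsq
    set β : K := α + τ with hβ
    have hrel : aeval β g = α * aeval β h := by
      simp only [hg, hh, map_sub, map_mul, map_pow, aeval_X, aeval_C, map_add, map_ofNat]
      linear_combination -hτ
    have heval : aeval β fQ = 0 := by
      rw [hfQ, aeval_ratTransform g h f β α hrel, hαf, mul_zero]
    have hmineq : fQ = minpoly F β := minpoly.eq_of_irreducible_of_monic hI heval hQmonic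
    have hle := minpoly.natDegree_le (A := F) (x := β)
    rw [← hmineq, hQdeg, hfinrank] at hle
    omega
  · -- nonsquare → irreducible
    intro hns
    have hc0 : f.eval u * f.eval v ≠ 0 := fun h0 => hns (h0 ▸ ⟨0, by ring⟩)
    have hsns : ¬ IsSquare s := fun hss => hns (hsqiff.mp hss)
    have hs0 : s ≠ 0 := fun h0 => hc0 (hziff.mp h0)
    have hirr2 : Irreducible ((X : K[X]) ^ 2 - C s) :=
      X_pow_sub_C_irreducible_of_prime Nat.prime_two (fun b hb => hsns ⟨b, by rw [← hb]; ring⟩)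
    haveI : Fact (Irreducible ((X : K[X]) ^ 2 - C s)) := ⟨hirr2⟩
    set L := AdjoinRoot ((X : K[X]) ^ 2 - C s) with hL
    have hq2ne : ((X : K[X]) ^ 2 - C s) ≠ 0 := hirr2.ne_zero
    haveI : FiniteDimensional K L := PowerBasis.finite (AdjoinRoot.powerBasis hq2ne)
    haveI : FiniteDimensional F L := Module.Finite.trans K L
    set t : L := AdjoinRoot.root ((X : K[X]) ^ 2 - C s) with ht
    have ht2 : t ^ 2 = algebraMap K L s := by
      have h0 : aeval t ((X : K[X]) ^ 2 - C s) = 0 := by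
        rw [AdjoinRoot.aeval_eq]; exact AdjoinRoot.mk_self
      rwa [map_sub, map_pow, aeval_X, aeval_C, sub_eq_zero] at h0
    set α' : L := algebraMap K L α with hα'
    set β : L := α' + t with hβ
    have hsl : t ^ 2 = (α' - algebraMap F L u) * (α' - algebraMap F L v) := by
      rw [ht2]
      show algebraMap K L ((α - algebraMap F K u) * (α - algebraMap F K v)) = _
      rw [map_mul, map_sub, map_sub, ← IsScalarTower.algebraMap_apply,
        ← IsScalarTower.algebraMap_apply]
    have hrelL : aeval β g = α' * aeval β h := by
      simp only [hg, hh, map_sub, map_mul, map_pow, aeval_X, aeval_C, map_add, map_ofNat]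
      linear_combination hsl
    have hαfL : aeval α' f = 0 := by
      rw [hα']
      exact (Polynomial.aeval_algebraMap_apply L α f).trans (by rw [hαf, map_zero])
    have hevalL : aeval β fQ = 0 := by
      rw [hfQ, aeval_ratTransform g h f β α' hrelL, hαfL, mul_zero]
    -- α' lies in F⟮β⟯
    have hinjKL : Function.Injective (algebraMap K L) := (algebraMap K L).injective
    have hhβ : aeval β h ≠ 0 := by
      intro h0
      simp only [hh, map_sub, map_mul, aeval_X, aeval_C, map_add, map_ofNat] at h0
      rw [hβ, hα'] at h0
      have h2L : (2 : L) ≠ 0 := fun hc =>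
        h2 ((algebraMap F L).injective (by rw [map_ofNat, map_zero]; exact hc))
      have h2K : (2 : K) ≠ 0 := fun hc =>
        h2 ((algebraMap F K).injective (by rw [map_ofNat, map_zero]; exact hc))
      have htc : algebraMap K L ((algebraMap F K u + algebraMap F K v) / 2 - α) = t := by
        rw [map_sub, map_div₀, map_add, ← IsScalarTower.algebraMap_apply,
          ← IsScalarTower.algebraMap_apply, map_ofNat]
        rw [sub_eq_iff_eq_add, div_eq_iff h2L]
        linear_combination -h0
      apply hsns
      refine ⟨(algebraMap F K u + algebraMap F K v) / 2 - α, hinjKL ?_⟩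
      calc (algebraMap K L) s = t ^ 2 := ht2.symm
        _ = (algebraMap K L) ((algebraMap F K u + algebraMap F K v) / 2 - α) ^ 2 := by
            rw [htc]
        _ = (algebraMap K L) (((algebraMap F K u + algebraMap F K v) / 2 - α) *
              ((algebraMap F K u + algebraMap F K v) / 2 - α)) := by
            rw [← map_pow]
            exact congrArg _ (sq _)
    have hαmem : α' ∈ F⟮β⟯ := by
      have hβm : β ∈ F⟮β⟯ := IntermediateField.mem_adjoin_simple_self F β
      have hg' : aeval β g ∈ F⟮β⟯ := aeval_mem_intermediateField _ hβm g
      have hh' : aeval β h ∈ F⟮β⟯ := aeval_mem_intermediateField _ hβm h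
      have hval : α' = aeval β g / aeval β h := by
        rw [hrelL]; exact (mul_div_cancel_right₀ _ hhβ).symm
      rw [hval]; exact div_mem hg' hh'
    have htmem : t ∈ F⟮β⟯ := by
      have hveq : t = β - α' := by rw [hβ]; ring
      rw [hveq]
      exact sub_mem (IntermediateField.mem_adjoin_simple_self F β) hαmem
    have hKmem : ∀ a : K, algebraMap K L a ∈ F⟮β⟯ := by
      intro a
      obtain ⟨p, hp⟩ := hgen a
      rw [← hp, ← Polynomial.aeval_algebraMap_apply]
      exact aeval_mem_intermediateField _ hαmem p
    have htop : F⟮β⟯ = ⊤ := by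
      rw [eq_top_iff]
      intro y _
      obtain ⟨P, hP⟩ := AdjoinRoot.mk_surjective y
      rw [← hP, ← AdjoinRoot.aeval_eq, Polynomial.aeval_eq_sum_range]
      refine sum_mem fun i _ => ?_
      rw [Algebra.smul_def]
      exact mul_mem (hKmem _) (pow_mem htmem i)
    have hβint : IsIntegral F β := IsIntegral.of_finite F β
    have hfr : Module.finrank F L = 2 * n := by
      rw [← Module.finrank_mul_finrank F K L, hfinrank]
      have hKL : Module.finrank K L = 2 := by
        rw [PowerBasis.finrank (AdjoinRoot.powerBasis hq2ne), AdjoinRoot.powerBasis_dim]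
        exact natDegree_X_pow_sub_C
      rw [hKL]; ring
    have hmdeg : (minpoly F β).natDegree = 2 * n := by
      rw [← IntermediateField.adjoin.finrank hβint, htop, IntermediateField.finrank_top', hfr]
    obtain ⟨c, hcq⟩ := minpoly.dvd F β hevalL
    have hmne : minpoly F β ≠ 0 := minpoly.ne_zero hβint
    have hQne : fQ ≠ 0 := hQmonic.ne_zero
    have hcne : c ≠ 0 := fun h0 => hQne (by rw [hcq, h0, mul_zero])
    have hcdeg : c.natDegree = 0 := by
      have hnd := natDegree_mul hmne hcne
      rw [← hcq, hQdeg, hmdeg] at hnd; omega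
    have hcC : c = C (c.coeff 0) := eq_C_of_natDegree_eq_zero hcdeg
    have hlead : c.coeff 0 = 1 := by
      have h1 : fQ.leadingCoeff = (minpoly F β).leadingCoeff * c.leadingCoeff := by
        rw [hcq, leadingCoeff_mul]
      rw [hQmonic.leadingCoeff, (minpoly.monic hβint).leadingCoeff, one_mul] at h1
      rw [leadingCoeff, hcdeg] at h1
      exact h1.symm
    have hfinal : fQ = minpoly F β := by
      rw [hcq, hcC, hlead, map_one, mul_one]
    exact hfinal ▸ minpoly.irreducible hβint
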